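/- Given a nonnegative finitely additive measure λ on a ring r of subsets of a set X, define the outer and inner measures of A ⊆ X by λ̄(A) = inf{λ(B) : B ∈ r, B ⊇ A} and λ̲(A) = sup{λ(B) : B ∈ r, B ⊆ A}. Then the collection ℛ = {A ⊆ X : λ̄(A) = λ̲(A) < ∞} is a ring of sets containing r, and the common value defines a finitely additive extension of λ to ℛ. -/

import Mathlib

open MeasureTheory

/-- Outer measure of `A` induced by a set function `μ` on a ring `r`. -/
noncomputable def outerM {X : Type*} (r : Set (Set X)) (μ : Set X → ENNReal)
    (A : Set X) : ENNReal :=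
  ⨅ (B : Set X) (_ : B ∈ r) (_ : A ⊆ B), μ B

/-- Inner measure of `A` induced by a set function `μ` on a ring `r`. -/
noncomputable def innerM {X : Type*} (r : Set (Set X)) (μ : Set X → ENNReal)
    (A : Set X) : ENNReal :=
  ⨆ (B : Set X) (_ : B ∈ r) (_ : B ⊆ A), μ B

section Aux

variable {X : Type*} {r : Set (Set X)} {μ : Set X → ENNReal}

lemma outer_le' {A B : Set X} (hB : B ∈ r) (hAB : A ⊆ B) : outerM r μ A ≤ μ B :=
  iInf_le_of_le B (iInf_le_of_le hB (iInf_le_of_le hAB le_rfl))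

lemma le_inner' {A B : Set X} (hB : B ∈ r) (hBA : B ⊆ A) : μ B ≤ innerM r μ A :=
  le_iSup_of_le B (le_iSup_of_le hB (le_iSup_of_le hBA le_rfl))

lemma mu_diff' (hr : IsSetRing r)
    (hadd : ∀ A B : Set X, A ∈ r → B ∈ r → Disjoint A B → μ (A ∪ B) = μ A + μ B)
    {B C : Set X} (hB : B ∈ r) (hC : C ∈ r) (hBC : B ⊆ C) :
    μ C = μ B + μ (C \ B) := by
  rw [← hadd B (C \ B) hB (hr.sdiff_mem hC hB) disjoint_sdiff_self_right,
    Set.union_diff_cancel hBC]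

lemma mu_mono' (hr : IsSetRing r)
    (hadd : ∀ A B : Set X, A ∈ r → B ∈ r → Disjoint A B → μ (A ∪ B) = μ A + μ B)
    {B C : Set X} (hB : B ∈ r) (hC : C ∈ r) (hBC : B ⊆ C) : μ B ≤ μ C := by
  rw [mu_diff' hr hadd hB hC hBC]; exact le_self_add

lemma mu_union_le' (hr : IsSetRing r)
    (hadd : ∀ A B : Set X, A ∈ r → B ∈ r → Disjoint A B → μ (A ∪ B) = μ A + μ B)
    {E F : Set X} (hE : E ∈ r) (hF : F ∈ r) : μ (E ∪ F) ≤ μ E + μ F := by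
  rw [← Set.union_diff_self, hadd E (F \ E) hE (hr.sdiff_mem hF hE) disjoint_sdiff_self_right]
  exact add_le_add_right (mu_mono' hr hadd (hr.sdiff_mem hF hE) hF Set.diff_subset) _

lemma mu_diff_le' (hr : IsSetRing r) (hfin : ∀ A ∈ r, μ A ≠ ⊤)
    (hadd : ∀ A B : Set X, A ∈ r → B ∈ r → Disjoint A B → μ (A ∪ B) = μ A + μ B)
    {B C : Set X} (hB : B ∈ r) (hC : C ∈ r) (hBC : B ⊆ C) {ε : ENNReal}
    (h : μ C ≤ μ B + ε) : μ (C \ B) ≤ ε := by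
  rw [mu_diff' hr hadd hB hC hBC] at h
  exact (ENNReal.add_le_add_iff_left (hfin B hB)).1 h

lemma mu_empty' (hr : IsSetRing r) (hfin : ∀ A ∈ r, μ A ≠ ⊤)
    (hadd : ∀ A B : Set X, A ∈ r → B ∈ r → Disjoint A B → μ (A ∪ B) = μ A + μ B) :
    μ (∅ : Set X) = 0 := by
  have h := hadd ∅ ∅ hr.empty_mem hr.empty_mem disjoint_bot_left
  rw [Set.union_empty] at h
  nth_rewrite 1 [← add_zero (μ (∅ : Set X))] at h
  exact ((ENNReal.add_right_inj (hfin ∅ hr.empty_mem)).1 h).symm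

lemma inner_le_outer' (hr : IsSetRing r)
    (hadd : ∀ A B : Set X, A ∈ r → B ∈ r → Disjoint A B → μ (A ∪ B) = μ A + μ B)
    (A : Set X) : innerM r μ A ≤ outerM r μ A := by
  simp only [innerM, outerM, iSup_le_iff, le_iInf_iff]
  intro a ha h1 b hb h2
  first
  | exact mu_mono' hr hadd ha hb (h1.trans h2)
  | exact mu_mono' hr hadd hb ha (h2.trans h1)

lemma outer_eq' (hr : IsSetRing r)
    (hadd : ∀ A B : Set X, A ∈ r → B ∈ r → Disjoint A B → μ (A ∪ B) = μ A + μ B)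
    {A : Set X} (hA : A ∈ r) : outerM r μ A = μ A := by
  refine le_antisymm (outer_le' hA subset_rfl) ?_
  simp only [outerM, le_iInf_iff]
  intro C hC hAC
  exact mu_mono' hr hadd hA hC hAC

lemma inner_eq' (hr : IsSetRing r)
    (hadd : ∀ A B : Set X, A ∈ r → B ∈ r → Disjoint A B → μ (A ∪ B) = μ A + μ B)
    {A : Set X} (hA : A ∈ r) : innerM r μ A = μ A := by
  refine le_antisymm ?_ (le_inner' hA subset_rfl)
  simp only [innerM, iSup_le_iff]
  intro B hB hBA
  exact mu_mono' hr hadd hB hA hBA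

/-- Sufficient condition for membership in the measurable collection. -/
lemma mem_R_of' (hr : IsSetRing r) (hfin : ∀ A ∈ r, μ A ≠ ⊤)
    (hadd : ∀ A B : Set X, A ∈ r → B ∈ r → Disjoint A B → μ (A ∪ B) = μ A + μ B)
    {A : Set X}
    (h : ∀ ε : ENNReal, ε ≠ 0 → ∃ B C, B ∈ r ∧ C ∈ r ∧ B ⊆ A ∧ A ⊆ C ∧ μ C ≤ μ B + ε) :
    outerM r μ A = innerM r μ A ∧ outerM r μ A ≠ ⊤ := by
  obtain ⟨B0, C0, hB0, hC0, hB0A, hAC0, -⟩ := h 1 one_ne_zero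
  have hne : outerM r μ A ≠ ⊤ :=
    fun ht => hfin C0 hC0 (top_le_iff.1 (ht ▸ outer_le' hC0 hAC0))
  refine ⟨le_antisymm ?_ (inner_le_outer' hr hadd A), hne⟩
  refine ENNReal.le_of_forall_pos_le_add fun ε hε _ => ?_
  obtain ⟨B, C, hB, hC, hBA, hAC, hle⟩ := h ε (by exact_mod_cast hε.ne')
  calc outerM r μ A ≤ μ C := outer_le' hC hAC
    _ ≤ μ B + ε := hle
    _ ≤ innerM r μ A + ε := add_le_add_left (le_inner' hB hBA) _

/-- Extraction of approximating sets from membership. -/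
lemma sandwich' (hr : IsSetRing r) (hfin : ∀ A ∈ r, μ A ≠ ⊤)
    (hadd : ∀ A B : Set X, A ∈ r → B ∈ r → Disjoint A B → μ (A ∪ B) = μ A + μ B)
    {A : Set X} (hmem : outerM r μ A = innerM r μ A ∧ outerM r μ A ≠ ⊤)
    {ε : ENNReal} (hε : ε ≠ 0) :
    ∃ B C, B ∈ r ∧ C ∈ r ∧ B ⊆ A ∧ A ⊆ C ∧ μ C ≤ μ B + ε := by
  obtain ⟨heq, hne⟩ := hmem
  have hε2 : (ε / 2 : ENNReal) ≠ 0 := (ENNReal.half_pos hε).ne'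
  -- get an outer approximation
  have hlt : outerM r μ A < outerM r μ A + ε / 2 := ENNReal.lt_add_right hne hε2
  have hout : ∃ C, ∃ _ : C ∈ r, ∃ _ : A ⊆ C, μ C < outerM r μ A + ε / 2 := by
    simpa only [outerM, iInf_lt_iff] using lt_of_le_of_lt (le_refl (outerM r μ A)) hlt
  obtain ⟨C, hC, hAC, hCle⟩ := hout
  by_cases hcase : outerM r μ A ≤ ε / 2
  · refine ⟨∅, C, hr.empty_mem, hC, Set.empty_subset A, hAC, ?_⟩
    rw [mu_empty' hr hfin hadd, zero_add]
    calc μ C ≤ outerM r μ A + ε / 2 := hCle.le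
      _ ≤ ε / 2 + ε / 2 := add_le_add_left hcase _
      _ = ε := ENNReal.add_halves ε
  · push_neg at hcase
    have hsub : outerM r μ A - ε / 2 < innerM r μ A := by
      rw [← heq]
      exact ENNReal.sub_lt_self hne (pos_of_gt hcase).ne' hε2
    have hin : ∃ B, ∃ _ : B ∈ r, ∃ _ : B ⊆ A, outerM r μ A - ε / 2 < μ B := by
      simpa only [innerM, lt_iSup_iff] using hsub
    obtain ⟨B, hB, hBA, hBge⟩ := hin
    have hv : outerM r μ A ≤ μ B + ε / 2 := tsub_le_iff_right.1 hBge.le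
    refine ⟨B, C, hB, hC, hBA, hAC, ?_⟩
    calc μ C ≤ outerM r μ A + ε / 2 := hCle.le
      _ ≤ (μ B + ε / 2) + ε / 2 := add_le_add_left hv _
      _ = μ B + ε := by rw [add_assoc, ENNReal.add_halves]

end Aux

/-- The collection of sets whose outer and inner measures agree and are finite is a
ring containing `r`, and the common value extends `μ` finitely additively. -/
theorem stmt14 {X : Type*} (r : Set (Set X)) (hr : MeasureTheory.IsSetRing r)
    (μ : Set X → ENNReal) (hfin : ∀ A ∈ r, μ A ≠ ⊤)
    (hadd : ∀ A B : Set X, A ∈ r → B ∈ r → Disjoint A B → μ (A ∪ B) = μ A + μ B) :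
    MeasureTheory.IsSetRing
      {A : Set X | outerM r μ A = innerM r μ A ∧ outerM r μ A ≠ ⊤} ∧
    r ⊆ {A : Set X | outerM r μ A = innerM r μ A ∧ outerM r μ A ≠ ⊤} ∧
    (∀ A ∈ r, outerM r μ A = μ A) ∧
    (∀ A B : Set X,
      A ∈ {A : Set X | outerM r μ A = innerM r μ A ∧ outerM r μ A ≠ ⊤} →
      B ∈ {A : Set X | outerM r μ A = innerM r μ A ∧ outerM r μ A ≠ ⊤} →
      Disjoint A B → outerM r μ (A ∪ B) = outerM r μ A + outerM r μ B) := by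
  have hrsub : r ⊆ {A : Set X | outerM r μ A = innerM r μ A ∧ outerM r μ A ≠ ⊤} := by
    intro A hA
    refine ⟨?_, ?_⟩
    · rw [outer_eq' hr hadd hA, inner_eq' hr hadd hA]
    · rw [outer_eq' hr hadd hA]; exact hfin A hA
  -- closure under union
  have hunion : ∀ A B : Set X,
      A ∈ {A : Set X | outerM r μ A = innerM r μ A ∧ outerM r μ A ≠ ⊤} →
      B ∈ {A : Set X | outerM r μ A = innerM r μ A ∧ outerM r μ A ≠ ⊤} →
      A ∪ B ∈ {A : Set X | outerM r μ A = innerM r μ A ∧ outerM r μ A ≠ ⊤} := by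
    intro A B hA hB
    refine mem_R_of' hr hfin hadd fun ε hε => ?_
    have hε2 : (ε / 2 : ENNReal) ≠ 0 := (ENNReal.half_pos hε).ne'
    obtain ⟨B1, C1, hB1, hC1, hB1A, hAC1, h1⟩ := sandwich' hr hfin hadd hA hε2
    obtain ⟨B2, C2, hB2, hC2, hB2B, hBC2, h2⟩ := sandwich' hr hfin hadd hB hε2
    refine ⟨B1 ∪ B2, C1 ∪ C2, hr.union_mem hB1 hB2, hr.union_mem hC1 hC2,
      Set.union_subset_union hB1A hB2B, Set.union_subset_union hAC1 hBC2, ?_⟩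
    have hBC : B1 ∪ B2 ⊆ C1 ∪ C2 :=
      Set.union_subset_union (hB1A.trans hAC1) (hB2B.trans hBC2)
    have hsub : (C1 ∪ C2) \ (B1 ∪ B2) ⊆ (C1 \ B1) ∪ (C2 \ B2) := by
      intro x hx
      simp only [Set.mem_diff, Set.mem_union, not_or] at hx ⊢
      tauto
    have hd1 : μ (C1 \ B1) ≤ ε / 2 :=
      mu_diff_le' hr hfin hadd hB1 hC1 (hB1A.trans hAC1) h1
    have hd2 : μ (C2 \ B2) ≤ ε / 2 :=
      mu_diff_le' hr hfin hadd hB2 hC2 (hB2B.trans hBC2) h2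
    calc μ (C1 ∪ C2) = μ (B1 ∪ B2) + μ ((C1 ∪ C2) \ (B1 ∪ B2)) :=
          mu_diff' hr hadd (hr.union_mem hB1 hB2) (hr.union_mem hC1 hC2) hBC
      _ ≤ μ (B1 ∪ B2) + μ ((C1 \ B1) ∪ (C2 \ B2)) :=
          add_le_add_right (mu_mono' hr hadd
            (hr.sdiff_mem (hr.union_mem hC1 hC2) (hr.union_mem hB1 hB2))
            (hr.union_mem (hr.sdiff_mem hC1 hB1) (hr.sdiff_mem hC2 hB2)) hsub) _
      _ ≤ μ (B1 ∪ B2) + (μ (C1 \ B1) + μ (C2 \ B2)) :=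
          add_le_add_right (mu_union_le' hr hadd (hr.sdiff_mem hC1 hB1)
            (hr.sdiff_mem hC2 hB2)) _
      _ ≤ μ (B1 ∪ B2) + (ε / 2 + ε / 2) :=
          add_le_add_right (add_le_add hd1 hd2) _
      _ = μ (B1 ∪ B2) + ε := by rw [ENNReal.add_halves]
  -- closure under difference
  have hdiff : ∀ A B : Set X,
      A ∈ {A : Set X | outerM r μ A = innerM r μ A ∧ outerM r μ A ≠ ⊤} →
      B ∈ {A : Set X | outerM r μ A = innerM r μ A ∧ outerM r μ A ≠ ⊤} →
      A \ B ∈ {A : Set X | outerM r μ A = innerM r μ A ∧ outerM r μ A ≠ ⊤} := by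
    intro A B hA hB
    refine mem_R_of' hr hfin hadd fun ε hε => ?_
    have hε2 : (ε / 2 : ENNReal) ≠ 0 := (ENNReal.half_pos hε).ne'
    obtain ⟨B1, C1, hB1, hC1, hB1A, hAC1, h1⟩ := sandwich' hr hfin hadd hA hε2
    obtain ⟨B2, C2, hB2, hC2, hB2B, hBC2, h2⟩ := sandwich' hr hfin hadd hB hε2
    refine ⟨B1 \ C2, C1 \ B2, hr.sdiff_mem hB1 hC2, hr.sdiff_mem hC1 hB2, ?_, ?_, ?_⟩
    · intro x hx
      exact ⟨hB1A hx.1, fun h => hx.2 (hBC2 h)⟩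
    · intro x hx
      exact ⟨hAC1 hx.1, fun h => hx.2 (hB2B h)⟩
    · have hDC : B1 \ C2 ⊆ C1 \ B2 := fun x hx =>
        ⟨(hB1A.trans hAC1) hx.1, fun h => hx.2 ((hB2B.trans hBC2) h)⟩
      have hsub : (C1 \ B2) \ (B1 \ C2) ⊆ (C1 \ B1) ∪ (C2 \ B2) := by
        intro x hx
        simp only [Set.mem_diff, Set.mem_union, not_and, not_not] at hx ⊢
        by_cases hxB1 : x ∈ B1
        · exact Or.inr ⟨hx.2 hxB1, hx.1.2⟩
        · exact Or.inl ⟨hx.1.1, hxB1⟩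
      have hd1 : μ (C1 \ B1) ≤ ε / 2 :=
        mu_diff_le' hr hfin hadd hB1 hC1 (hB1A.trans hAC1) h1
      have hd2 : μ (C2 \ B2) ≤ ε / 2 :=
        mu_diff_le' hr hfin hadd hB2 hC2 (hB2B.trans hBC2) h2
      calc μ (C1 \ B2) = μ (B1 \ C2) + μ ((C1 \ B2) \ (B1 \ C2)) :=
            mu_diff' hr hadd (hr.sdiff_mem hB1 hC2) (hr.sdiff_mem hC1 hB2) hDC
        _ ≤ μ (B1 \ C2) + μ ((C1 \ B1) ∪ (C2 \ B2)) :=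
            add_le_add_right (mu_mono' hr hadd
              (hr.sdiff_mem (hr.sdiff_mem hC1 hB2) (hr.sdiff_mem hB1 hC2))
              (hr.union_mem (hr.sdiff_mem hC1 hB1) (hr.sdiff_mem hC2 hB2)) hsub) _
        _ ≤ μ (B1 \ C2) + (μ (C1 \ B1) + μ (C2 \ B2)) :=
            add_le_add_right (mu_union_le' hr hadd (hr.sdiff_mem hC1 hB1)
              (hr.sdiff_mem hC2 hB2)) _
        _ ≤ μ (B1 \ C2) + (ε / 2 + ε / 2) :=
            add_le_add_right (add_le_add hd1 hd2) _
        _ = μ (B1 \ C2) + ε := by rw [ENNReal.add_halves]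
  have hring : MeasureTheory.IsSetRing
      {A : Set X | outerM r μ A = innerM r μ A ∧ outerM r μ A ≠ ⊤} :=
    ⟨hrsub hr.empty_mem, fun s t hs ht => hunion s t hs ht, fun s t hs ht => hdiff s t hs ht⟩
  refine ⟨hring, hrsub, fun A hA => outer_eq' hr hadd hA, ?_⟩
  -- finite additivity on the extended ring
  intro A B hA hB hAB
  have hABmem := hunion A B hA hB
  refine le_antisymm ?_ ?_
  · refine ENNReal.le_of_forall_pos_le_add fun ε hε _ => ?_
    have hεne : ((ε : ENNReal)) ≠ 0 := by exact_mod_cast hε.ne'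
    have hε2 : ((ε : ENNReal) / 2) ≠ 0 := (ENNReal.half_pos hεne).ne'
    obtain ⟨B1, C1, hB1, hC1, hB1A, hAC1, h1⟩ := sandwich' hr hfin hadd hA hε2
    obtain ⟨B2, C2, hB2, hC2, hB2B, hBC2, h2⟩ := sandwich' hr hfin hadd hB hε2
    calc outerM r μ (A ∪ B) ≤ μ (C1 ∪ C2) :=
          outer_le' (hr.union_mem hC1 hC2) (Set.union_subset_union hAC1 hBC2)
      _ ≤ μ C1 + μ C2 := mu_union_le' hr hadd hC1 hC2
      _ ≤ (μ B1 + ε / 2) + (μ B2 + ε / 2) := add_le_add h1 h2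
      _ = (μ B1 + μ B2) + (ε / 2 + ε / 2) := add_add_add_comm _ _ _ _
      _ ≤ (innerM r μ A + innerM r μ B) + ε := by
          rw [ENNReal.add_halves]
          exact add_le_add_left (add_le_add (le_inner' hB1 hB1A) (le_inner' hB2 hB2B)) _
      _ = outerM r μ A + outerM r μ B + ε := by rw [hA.1, hB.1]
  · refine ENNReal.le_of_forall_pos_le_add fun ε hε _ => ?_
    have hεne : ((ε : ENNReal)) ≠ 0 := by exact_mod_cast hε.ne'
    have hε2 : ((ε : ENNReal) / 2) ≠ 0 := (ENNReal.half_pos hεne).ne'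
    obtain ⟨B1, C1, hB1, hC1, hB1A, hAC1, h1⟩ := sandwich' hr hfin hadd hA hε2
    obtain ⟨B2, C2, hB2, hC2, hB2B, hBC2, h2⟩ := sandwich' hr hfin hadd hB hε2
    have hdisj : Disjoint B1 B2 := hAB.mono hB1A hB2B
    calc outerM r μ A + outerM r μ B ≤ μ C1 + μ C2 :=
          add_le_add (outer_le' hC1 hAC1) (outer_le' hC2 hBC2)
      _ ≤ (μ B1 + ε / 2) + (μ B2 + ε / 2) := add_le_add h1 h2
      _ = (μ B1 + μ B2) + (ε / 2 + ε / 2) := add_add_add_comm _ _ _ _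
      _ = μ (B1 ∪ B2) + ε := by rw [ENNReal.add_halves, hadd B1 B2 hB1 hB2 hdisj]
      _ ≤ innerM r μ (A ∪ B) + ε := add_le_add_left
          (le_inner' (hr.union_mem hB1 hB2) (Set.union_subset_union hB1A hB2B)) _
      _ = outerM r μ (A ∪ B) + ε := by rw [hABmem.1]
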